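/- If Q ≻ 0, λ ∈ (0,1), and the block matrix [[(λ-1)Q, 0, QAᵀ + YᵀBᵀ], [0, -λI, B_wᵀ + F_wᵀBᵀ], [(AQ + BY), (B_w + BF_w), -Q]] ⪯ 0, then with A_cl = A + B Y Q⁻¹ and B_cl = B_w + B F_w, every x with xᵀQ⁻¹x ≤ 1 and every w with wᵀw ≤ 1 satisfy (A_cl x + B_cl w)ᵀ Q⁻¹ (A_cl x + B_cl w) ≤ 1. -/

import Mathlib

open Matrix

/-- The LMI certifies that the ellipsoid {x : xᵀQ⁻¹x ≤ 1} is inescapable for the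
closed-loop dynamics x⁺ = A_cl x + B_cl w under unit-norm disturbances, where
A_cl = A + B Y Q⁻¹ and B_cl = Bw + B Fw. -/
theorem stmt17 (n m : ℕ) (A : Matrix (Fin n) (Fin n) ℝ)
    (B : Matrix (Fin n) (Fin 1) ℝ) (Bw : Matrix (Fin n) (Fin m) ℝ)
    (Y : Matrix (Fin 1) (Fin n) ℝ) (Fw : Matrix (Fin 1) (Fin m) ℝ)
    (Q : Matrix (Fin n) (Fin n) ℝ) (hQs : Q.IsSymm) (hQ : Q.PosDef)
    (lam : ℝ) (hlam0 : 0 < lam) (hlam1 : lam < 1)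
    (hLMI : (-(Matrix.fromBlocks
        (Matrix.fromBlocks ((lam - 1) • Q) 0 0 ((-lam) • (1 : Matrix (Fin m) (Fin m) ℝ)))
        (Matrix.fromRows (Q * Aᵀ + Yᵀ * Bᵀ) (Bwᵀ + Fwᵀ * Bᵀ))
        (Matrix.fromCols (A * Q + B * Y) (Bw + B * Fw))
        (-Q))).PosSemidef)
    (Acl : Matrix (Fin n) (Fin n) ℝ) (hAcl : Acl = A + B * Y * Q⁻¹)
    (Bcl : Matrix (Fin n) (Fin m) ℝ) (hBcl : Bcl = Bw + B * Fw) :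
    ∀ (x : Fin n → ℝ) (w : Fin m → ℝ),
      x ⬝ᵥ Q⁻¹.mulVec x ≤ 1 → w ⬝ᵥ w ≤ 1 →
      (Acl.mulVec x + Bcl.mulVec w) ⬝ᵥ Q⁻¹.mulVec (Acl.mulVec x + Bcl.mulVec w) ≤ 1 := by
  intro x w hx hw
  have hdet : IsUnit Q.det := (Matrix.isUnit_iff_isUnit_det Q).mp hQ.isUnit
  have hQQ : Q * Q⁻¹ = 1 := Matrix.mul_nonsing_inv Q hdet
  set s : Fin n → ℝ := Acl *ᵥ x + Bcl *ᵥ w with hs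
  set ξ : Fin n → ℝ := Q⁻¹ *ᵥ x with hxi
  set y : Fin n → ℝ := Q⁻¹ *ᵥ s with hy
  have hQxi : Q *ᵥ ξ = x := by rw [hxi, Matrix.mulVec_mulVec, hQQ, Matrix.one_mulVec]
  have hQy : Q *ᵥ y = s := by rw [hy, Matrix.mulVec_mulVec, hQQ, Matrix.one_mulVec]
  have hF1 : (A * Q + B * Y) *ᵥ ξ = Acl *ᵥ x := by
    rw [hxi, Matrix.mulVec_mulVec, hAcl]
    rw [Matrix.add_mul, Matrix.mul_assoc A Q Q⁻¹, hQQ, Matrix.mul_one, Matrix.mul_assoc]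
  have hTa : (Q * Aᵀ + Yᵀ * Bᵀ)ᵀ = A * Q + B * Y := by
    simp [Matrix.transpose_add, Matrix.transpose_mul, hQs.eq]
  have hTb : (Bwᵀ + Fwᵀ * Bᵀ)ᵀ = Bw + B * Fw := by
    simp [Matrix.transpose_add, Matrix.transpose_mul]
  set c : ℝ := s ⬝ᵥ Q⁻¹ *ᵥ s with hc
  have hys : y ⬝ᵥ s = c := by rw [dotProduct_comm, hc, hy]
  have hcross1 : ξ ⬝ᵥ (Q * Aᵀ + Yᵀ * Bᵀ) *ᵥ y = (Acl *ᵥ x) ⬝ᵥ y := by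
    rw [Matrix.dotProduct_mulVec, ← Matrix.mulVec_transpose, hTa, hF1]
  have hcross2 : w ⬝ᵥ (Bwᵀ + Fwᵀ * Bᵀ) *ᵥ y = (Bcl *ᵥ w) ⬝ᵥ y := by
    rw [Matrix.dotProduct_mulVec, ← Matrix.mulVec_transpose, hTb, hBcl]
  have hv := hLMI.dotProduct_mulVec_nonneg (Sum.elim (Sum.elim ξ w) y)
  rw [Matrix.neg_mulVec, dotProduct_neg] at hv
  have key : (Sum.elim (Sum.elim ξ w) y) ⬝ᵥ
      (Matrix.fromBlocks
        (Matrix.fromBlocks ((lam - 1) • Q) 0 0 ((-lam) • (1 : Matrix (Fin m) (Fin m) ℝ)))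
        (Matrix.fromRows (Q * Aᵀ + Yᵀ * Bᵀ) (Bwᵀ + Fwᵀ * Bᵀ))
        (Matrix.fromCols (A * Q + B * Y) (Bw + B * Fw))
        (-Q)) *ᵥ (Sum.elim (Sum.elim ξ w) y)
      = (lam - 1) * (x ⬝ᵥ Q⁻¹ *ᵥ x) - lam * (w ⬝ᵥ w) + c := by
    rw [Matrix.fromBlocks_mulVec]
    simp only [Sum.elim_comp_inl, Sum.elim_comp_inr, Matrix.fromBlocks_mulVec,
      Matrix.fromRows_mulVec, Matrix.fromCols_mulVec_sumElim,
      Matrix.zero_mulVec, add_zero, zero_add, sumElim_dotProduct_sumElim,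
      dotProduct_add, add_dotProduct, Matrix.smul_mulVec,
      dotProduct_smul, Matrix.one_mulVec, Matrix.neg_mulVec,
      dotProduct_neg]
    have h1 : ξ ⬝ᵥ Q *ᵥ ξ = x ⬝ᵥ Q⁻¹ *ᵥ x := by
      rw [hQxi, dotProduct_comm, hxi]
    have h2 : y ⬝ᵥ Q *ᵥ y = c := by rw [hQy, hys]
    have h3 : y ⬝ᵥ ((A * Q + B * Y) *ᵥ ξ + (Bw + B * Fw) *ᵥ w) = c := by
      rw [hF1, ← hBcl, ← hs, hys]
    have h4 : (Acl *ᵥ x) ⬝ᵥ y + (Bcl *ᵥ w) ⬝ᵥ y = c := by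
      rw [← add_dotProduct, ← hs, dotProduct_comm, hys]
    rw [h1, h2, hcross1, hcross2, hF1, ← hBcl]
    have h5 : y ⬝ᵥ Acl *ᵥ x = (Acl *ᵥ x) ⬝ᵥ y := dotProduct_comm _ _
    have h6 : y ⬝ᵥ Bcl *ᵥ w = (Bcl *ᵥ w) ⬝ᵥ y := dotProduct_comm _ _
    simp only [smul_eq_mul]
    linarith [h4, h5, h6]
  have hstar : star (Sum.elim (Sum.elim ξ w) y) = Sum.elim (Sum.elim ξ w) y := by
    ext i; simp
  rw [hstar, key] at hv
  show c ≤ 1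
  nlinarith [hv, hx, hw]
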